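/- Let (μ_n) be a sequence of sub-probability measures on ℝ^d such that for every r > 0, sup_x μ_n(B(x,r)) → 0 (total disintegration). Then for every k ≥ 2 and every continuous translation-invariant function f: (ℝ^d)^k → ℝ vanishing at infinity (i.e., f(x_1+y,…,x_k+y)=f(x_1,…,x_k) for all y, and f → 0 as max_{i≠j}|x_i−x_j| → ∞), the k-fold integral ∫…∫ f(x_1,…,x_k) dμ_n(x_1)⋯dμ_n(x_k) → 0. -/

import Mathlib

open MeasureTheory Filter Topology Metric

lemma aux_pi_ball_bound (d k : ℕ) (hk : 2 ≤ k) (μ : Measure (EuclideanSpace ℝ (Fin d)))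
    [IsFiniteMeasure μ] (hμ : μ Set.univ ≤ 1) (M : ℝ) :
    Measure.pi (fun _ : Fin k => μ)
      {x | dist (x ⟨1, by omega⟩) (x ⟨0, by omega⟩) < M} ≤ ⨆ y, μ (ball y M) := by
  obtain ⟨m, rfl⟩ : ∃ m, k = m + 2 := ⟨k - 2, by omega⟩
  set E := EuclideanSpace ℝ (Fin d) with hE
  have hpres := measurePreserving_piFinSuccAbove (fun _ : Fin (m + 2) => μ) 0
  set e := MeasurableEquiv.piFinSuccAbove (fun _ : Fin (m + 2) => E) 0 with he
  set S : Set (E × (Fin (m + 1) → E)) := {p | dist (p.2 0) p.1 < M} with hS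
  have hSm : MeasurableSet S := by
    have hc : Continuous fun p : E × (Fin (m + 1) → E) => dist (p.2 0) p.1 :=
      Continuous.dist ((continuous_apply (0 : Fin (m+1))).comp continuous_snd) continuous_fst
    exact measurableSet_lt hc.measurable measurable_const
  have hpre : e ⁻¹' S = {x : Fin (m+2) → E | dist (x ⟨1, by omega⟩) (x ⟨0, by omega⟩) < M} := by
    ext x
    simp only [he, hS, Set.mem_preimage, Set.mem_setOf_eq,
      MeasurableEquiv.piFinSuccAbove_apply, Fin.insertNthEquiv_symm_apply]
    norm_num [Fin.succAbove]
    simp [Fin.tail, Fin.succ]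
  have key : Measure.pi (fun _ : Fin (m+2) => μ) (e ⁻¹' S)
      = (μ.prod (Measure.pi fun _ : Fin (m+1) => μ)) S :=
    hpres.measure_preimage hSm.nullMeasurableSet
  rw [← hpre, key, Measure.prod_apply hSm]
  have inner : ∀ a : E, (Measure.pi fun _ : Fin (m+1) => μ) (Prod.mk a ⁻¹' S) ≤ μ (ball a M) := by
    intro a
    have : Prod.mk a ⁻¹' S = Function.eval (0 : Fin (m+1)) ⁻¹' ball a M := by
      ext z; simp [hS, mem_ball]
    rw [this, Set.eval_preimage, Measure.pi_pi]
    calc ∏ j : Fin (m+1), μ (Function.update (fun _ => Set.univ) 0 (ball a M) j)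
        = μ (Function.update (fun _ => Set.univ) 0 (ball a M) 0)
            * ∏ j ∈ Finset.univ.erase 0, μ (Function.update (fun _ => Set.univ) 0 (ball a M) j) :=
          (Finset.mul_prod_erase _ _ (Finset.mem_univ 0)).symm
      _ ≤ μ (ball a M) * 1 := by
          simp only [Function.update_self]
          refine mul_le_mul_right (Finset.prod_le_one (fun j hj => zero_le) ?_) _
          intro j hj
          rw [Function.update_of_ne (Finset.ne_of_mem_erase hj)]
          exact hμ
      _ = μ (ball a M) := mul_one _
  calc ∫⁻ a, (Measure.pi fun _ : Fin (m+1) => μ) (Prod.mk a ⁻¹' S) ∂μ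
      ≤ ∫⁻ _, (⨆ y, μ (ball y M)) ∂μ :=
        lintegral_mono fun a => (inner a).trans (le_iSup (fun y => μ (ball y M)) a)
    _ = (⨆ y, μ (ball y M)) * μ Set.univ := lintegral_const _
    _ ≤ (⨆ y, μ (ball y M)) * 1 := mul_le_mul_right hμ _
    _ = _ := mul_one _


/-- Total disintegration: if sup_x μ_n(B(x,r)) → 0 for every r > 0, then for every
k ≥ 2 and every continuous, translation-invariant f : (ℝ^d)^k → ℝ vanishing at
infinity, the k-fold integral of f against μ_n^{⊗k} tends to 0. -/
theorem stmt7 (d k : ℕ) (hk : 2 ≤ k) (μ : ℕ → Measure (EuclideanSpace ℝ (Fin d)))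
    [∀ n, IsFiniteMeasure (μ n)] (hμ : ∀ n, μ n Set.univ ≤ 1)
    (hdis : ∀ r : ℝ, 0 < r →
      Tendsto (fun n => ⨆ x : EuclideanSpace ℝ (Fin d), μ n (ball x r)) atTop (𝓝 0))
    (f : (Fin k → EuclideanSpace ℝ (Fin d)) → ℝ) (hfc : Continuous f)
    (hinv : ∀ (x : Fin k → EuclideanSpace ℝ (Fin d)) (y : EuclideanSpace ℝ (Fin d)),
      f (fun i => x i + y) = f x)
    (hvanish : ∀ ε : ℝ, 0 < ε → ∃ M : ℝ, ∀ x : Fin k → EuclideanSpace ℝ (Fin d),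
      (∃ i j, i ≠ j ∧ M ≤ ‖x i - x j‖) → |f x| ≤ ε) :
    Tendsto (fun n => ∫ x, f x ∂(Measure.pi fun _ : Fin k => μ n)) atTop (𝓝 0) := by
  -- Step 1: f is bounded
  obtain ⟨M0, hM0⟩ := hvanish 1 one_pos
  set M1 : ℝ := max M0 0 with hM1def
  obtain ⟨C0, hC0⟩ := (isCompact_closedBall (0 : Fin k → EuclideanSpace ℝ (Fin d)) M1).exists_bound_of_continuousOn
    hfc.continuousOn
  set C : ℝ := max C0 1 with hCdef
  have hC1 : (1:ℝ) ≤ C := le_max_right _ _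
  have hC : ∀ x, |f x| ≤ C := by
    intro x
    by_cases hx : ∃ i j, i ≠ j ∧ M0 ≤ ‖x i - x j‖
    · exact (hM0 x hx).trans hC1
    · push_neg at hx
      set x' : Fin k → EuclideanSpace ℝ (Fin d) := fun i => x i - x ⟨0, by omega⟩ with hx'def
      have hmem : x' ∈ closedBall (0 : Fin k → EuclideanSpace ℝ (Fin d)) M1 := by
        rw [mem_closedBall, dist_pi_le_iff (le_max_right M0 0)]
        intro b
        rw [Pi.zero_apply, dist_zero_right]
        by_cases hb : b = ⟨0, by omega⟩
        · simp [hx'def, hb, le_max_right M0 0]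
        · refine le_trans (le_of_lt ?_) (le_max_left M0 0)
          show ‖x b - x ⟨0, by omega⟩‖ < M0
          exact hx b ⟨0, by omega⟩ hb
      have hfx : f x = f x' := by
        rw [← hinv x' (x ⟨0, by omega⟩)]
        congr 1
        funext i
        simp [hx'def]
      rw [hfx, ← Real.norm_eq_abs]
      exact (hC0 x' hmem).trans (le_max_left _ _)
  have hC0' : (0:ℝ) ≤ C := zero_le_one.trans hC1
  -- Step 2: epsilon argument
  rw [NormedAddCommGroup.tendsto_nhds_zero]
  intro ε hε
  obtain ⟨M, hM⟩ := hvanish (ε/2) (half_pos hε)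
  set M' : ℝ := max M 1 with hM'def
  have hM'pos : (0:ℝ) < M' := lt_of_lt_of_le one_pos (le_max_right M 1)
  have hδpos : (0 : ENNReal) < ENNReal.ofReal (ε / (2*(C+1))) :=
    ENNReal.ofReal_pos.mpr (by positivity)
  have hev2 : ∀ᶠ n in atTop, (⨆ x : EuclideanSpace ℝ (Fin d), μ n (ball x M')) < ENNReal.ofReal (ε / (2*(C+1))) :=
    (hdis M' hM'pos).eventually_lt_const hδpos
  filter_upwards [hev2] with n hn
  set ν := Measure.pi fun _ : Fin k => μ n with hνdef
  have hνuniv : ν Set.univ ≤ 1 := by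
    rw [hνdef, Measure.pi_univ]
    exact Finset.prod_le_one (fun _ _ => zero_le) (fun _ _ => hμ n)
  set i1 : Fin k := ⟨1, by omega⟩ with hi1
  set j0 : Fin k := ⟨0, by omega⟩ with hj0
  set A : Set (Fin k → EuclideanSpace ℝ (Fin d)) := {x | dist (x i1) (x j0) < M'} with hA
  have hAm : MeasurableSet A :=
    measurableSet_lt ((continuous_apply i1).dist (continuous_apply j0)).measurable
      measurable_const
  have hAb : ν A ≤ ⨆ y : EuclideanSpace ℝ (Fin d), μ n (ball y M') := aux_pi_ball_bound d k hk (μ n) (hμ n) M'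
  set g : (Fin k → EuclideanSpace ℝ (Fin d)) → ℝ := fun x => ε/2 + Set.indicator A (fun _ => C) x with hg
  have hfg : ∀ x, ‖f x‖ ≤ g x := by
    intro x
    rw [Real.norm_eq_abs]
    by_cases hx : x ∈ A
    · rw [hg]; simp only [Set.indicator_of_mem hx]
      linarith [hC x]
    · have h1 : M' ≤ dist (x i1) (x j0) := not_lt.mp hx
      have h2 : M ≤ ‖x i1 - x j0‖ := by
        rw [← dist_eq_norm]; exact (le_max_left M 1).trans h1
      have h3 : |f x| ≤ ε/2 := hM x ⟨i1, j0, by simp [hi1, hj0, Fin.ext_iff], h2⟩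
      rw [hg]; simp only [Set.indicator_of_notMem hx]
      linarith
  have hintf : Integrable f ν :=
    Integrable.mono' (integrable_const C) hfc.aestronglyMeasurable
      (ae_of_all _ fun x => by rw [Real.norm_eq_abs]; exact hC x)
  have hintg : Integrable g ν :=
    (integrable_const (ε/2)).add ((integrable_const C).indicator hAm)
  have hνA : (ν A).toReal ≤ ε / (2*(C+1)) := by
    have h1 : ν A ≤ ENNReal.ofReal (ε / (2*(C+1))) := hAb.trans hn.le
    calc (ν A).toReal ≤ (ENNReal.ofReal (ε / (2*(C+1)))).toReal :=
          ENNReal.toReal_mono ENNReal.ofReal_ne_top h1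
      _ = ε / (2*(C+1)) := ENNReal.toReal_ofReal (by positivity)
  have hνu : (ν Set.univ).toReal ≤ 1 := by
    simpa using ENNReal.toReal_mono ENNReal.one_ne_top hνuniv
  have hνA0 : (0:ℝ) ≤ (ν A).toReal := ENNReal.toReal_nonneg
  have hνu0 : (0:ℝ) ≤ (ν Set.univ).toReal := ENNReal.toReal_nonneg
  have key : ‖∫ x, f x ∂ν‖ ≤ (ν Set.univ).toReal * (ε/2) + (ν A).toReal * C := by
    calc ‖∫ x, f x ∂ν‖ ≤ ∫ x, ‖f x‖ ∂ν := norm_integral_le_integral_norm f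
      _ ≤ ∫ x, g x ∂ν := integral_mono hintf.norm hintg hfg
      _ = (ν Set.univ).toReal * (ε/2) + (ν A).toReal * C := by
          rw [hg, integral_add (integrable_const _) ((integrable_const C).indicator hAm),
            integral_const, integral_indicator_const _ hAm, smul_eq_mul, smul_eq_mul]
          rfl
  have hfrac : ε / (2*(C+1)) * C < ε/2 := by
    rw [div_mul_eq_mul_div, div_lt_div_iff₀ (by positivity) (by norm_num)]
    nlinarith
  calc ‖∫ x, f x ∂ν‖ ≤ (ν Set.univ).toReal * (ε/2) + (ν A).toReal * C := key
    _ ≤ 1 * (ε/2) + (ε / (2*(C+1))) * C := by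
        gcongr
    _ < 1 * (ε/2) + ε/2 := by linarith
    _ = ε := by ring
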